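/- Let E ⊆ ℝⁿ and let γ be a non-constant rectifiable path. Let F₁ be the set of x ∈ ℝⁿ such that E ∩ |γ + x| ≠ ∅. Then the outer Lebesgue n-measure of F₁ is at most c(n) · max{ℓ(γ), diam(E)} · diam(E)^{n-1} for a constant c(n) depending only on n. -/

import Mathlib

open MeasureTheory Set
open scoped ENNReal

/-- A rectifiable curve in `ℝⁿ`, given by its arclength parametrization on `[0, len]`. -/
structure RectCurve (n : ℕ) where
  len : ℝ
  len_nonneg : 0 ≤ len
  toFun : ℝ → EuclideanSpace ℝ (Fin n)
  arclength : ∀ t ∈ Set.Icc 0 len, eVariationOn toFun (Set.Icc 0 t) = ENNReal.ofReal t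

/-- The line integral `∫_γ ρ ds` of a Borel function over a rectifiable curve
(via its arclength parametrization). -/
noncomputable def lineIntegral {n : ℕ} (ρ : EuclideanSpace ℝ (Fin n) → ℝ≥0∞)
    (γ : RectCurve n) : ℝ≥0∞ :=
  ∫⁻ t in Set.Icc 0 γ.len, ρ (γ.toFun t)

/-- A Borel function `ρ ≥ 0` is admissible for a curve family `Γ` if `∫_γ ρ ds ≥ 1`
for every `γ ∈ Γ`. -/
def Admissible {n : ℕ} (ρ : EuclideanSpace ℝ (Fin n) → ℝ≥0∞) (Γ : Set (RectCurve n)) : Prop :=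
  Measurable ρ ∧ ∀ γ ∈ Γ, 1 ≤ lineIntegral ρ γ

/-- The `p`-modulus of a curve family: `inf ∫ ρᵖ` over admissible `ρ`. -/
noncomputable def modulus {n : ℕ} (p : ℝ) (Γ : Set (RectCurve n)) : ℝ≥0∞ :=
  ⨅ (ρ : EuclideanSpace ℝ (Fin n) → ℝ≥0∞) (_ : Admissible ρ Γ), ∫⁻ x, ρ x ^ p

private lemma rc_lip {n : ℕ} (γ : RectCurve n) {s t : ℝ} (hs : 0 ≤ s) (hst : s ≤ t)
    (ht : t ≤ γ.len) : dist (γ.toFun s) (γ.toFun t) ≤ t - s := by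
  have hsm : s ∈ Set.Icc (0:ℝ) γ.len := ⟨hs, hst.trans ht⟩
  have htm : t ∈ Set.Icc (0:ℝ) γ.len := ⟨hs.trans hst, ht⟩
  have hadd := eVariationOn.Icc_add_Icc γ.toFun (s := Set.univ) hs hst (Set.mem_univ s)
  simp only [Set.univ_inter] at hadd
  rw [γ.arclength s hsm, γ.arclength t htm] at hadd
  have hVeq : eVariationOn γ.toFun (Set.Icc s t) = ENNReal.ofReal t - ENNReal.ofReal s := by
    rw [add_comm] at hadd
    exact ENNReal.eq_sub_of_add_eq ENNReal.ofReal_ne_top hadd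
  have hV : eVariationOn γ.toFun (Set.Icc s t) ≤ ENNReal.ofReal (t - s) := by
    rw [hVeq, ENNReal.ofReal_sub _ hs]
  have he : edist (γ.toFun s) (γ.toFun t) ≤ ENNReal.ofReal (t - s) :=
    le_trans (eVariationOn.edist_le γ.toFun (Set.left_mem_Icc.2 hst) (Set.right_mem_Icc.2 hst)) hV
  rw [edist_dist] at he
  exact (ENNReal.ofReal_le_ofReal_iff (by linarith)).1 he

private lemma cover_bound {n : ℕ} (γ : RectCurve n) {E : Set (EuclideanSpace ℝ (Fin n))}
    {e₀ : EuclideanSpace ℝ (Fin n)} (he₀ : e₀ ∈ E) (hdiam : EMetric.diam E ≠ ⊤)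
    {h : ℝ} (hh : 0 < h) :
    volume {x : EuclideanSpace ℝ (Fin n) |
        (E ∩ (fun t => γ.toFun t + x) '' Set.Icc 0 γ.len).Nonempty} ≤
      (↑(⌊γ.len / h⌋₊ + 1) : ℝ≥0∞) *
        (ENNReal.ofReal (((EMetric.diam E).toReal + h) ^ n) *
          volume (Metric.ball (0 : EuclideanSpace ℝ (Fin n)) 1)) := by
  set d := (EMetric.diam E).toReal with hd
  have hd0 : 0 ≤ d := ENNReal.toReal_nonneg
  have hbd : Bornology.IsBounded E := Metric.isBounded_iff_ediam_ne_top.2 hdiam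
  set N := ⌊γ.len / h⌋₊ with hN
  have hsub : {x : EuclideanSpace ℝ (Fin n) |
        (E ∩ (fun t => γ.toFun t + x) '' Set.Icc 0 γ.len).Nonempty} ⊆
      ⋃ k ∈ Finset.range (N + 1),
        Metric.closedBall (e₀ - γ.toFun (k * h)) (d + h) := by
    rintro x ⟨e, heE, t, ht, heq⟩
    have hx : x = e - γ.toFun t := by
      simp only at heq
      rw [← heq]; abel
    set k := ⌊t / h⌋₊ with hk
    have hkN : k < N + 1 := by
      have : (⌊t / h⌋₊ : ℕ) ≤ N := Nat.floor_le_floor (by gcongr; exact ht.2)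
      omega
    have hkh : (k : ℝ) * h ≤ t := by
      have := Nat.floor_le (div_nonneg ht.1 hh.le)
      calc (k : ℝ) * h ≤ t / h * h := by gcongr
        _ = t := div_mul_cancel₀ _ hh.ne'
    have hkh0 : (0:ℝ) ≤ (k:ℝ) * h := by positivity
    have htk : t - (k:ℝ) * h ≤ h := by
      have h1 : t / h < k + 1 := Nat.lt_floor_add_one _
      have h2 : t < ((k:ℝ) + 1) * h := by
        calc t = t / h * h := (div_mul_cancel₀ _ hh.ne').symm
          _ < ((k:ℝ)+1) * h := by gcongr
      linarith
    refine Set.mem_iUnion₂.2 ⟨k, Finset.mem_range.2 hkN, ?_⟩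
    rw [Metric.mem_closedBall, hx]
    have h3 : dist (e - γ.toFun t) (e₀ - γ.toFun ((k:ℝ) * h)) ≤
        dist e e₀ + dist (γ.toFun t) (γ.toFun ((k:ℝ) * h)) := dist_sub_sub_le _ _ _ _
    have h4 : dist e e₀ ≤ d := Metric.dist_le_diam_of_mem hbd heE he₀
    have h5 : dist (γ.toFun t) (γ.toFun ((k:ℝ) * h)) ≤ h := by
      rw [dist_comm]
      have := rc_lip γ hkh0 hkh ht.2
      linarith
    calc dist (e - γ.toFun t) (e₀ - γ.toFun (↑k * h)) ≤ _ := h3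
      _ ≤ d + h := by linarith
  calc volume {x : EuclideanSpace ℝ (Fin n) |
        (E ∩ (fun t => γ.toFun t + x) '' Set.Icc 0 γ.len).Nonempty}
      ≤ volume (⋃ k ∈ Finset.range (N + 1),
        Metric.closedBall (e₀ - γ.toFun (k * h)) (d + h)) := measure_mono hsub
    _ ≤ ∑ k ∈ Finset.range (N + 1),
        volume (Metric.closedBall (e₀ - γ.toFun (k * h)) (d + h)) :=
      measure_biUnion_finset_le _ _
    _ = ∑ _k ∈ Finset.range (N + 1),
        (ENNReal.ofReal ((d + h) ^ n) * volume (Metric.ball (0 : EuclideanSpace ℝ (Fin n)) 1)) := by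
      refine Finset.sum_congr rfl fun k _ => ?_
      rw [Measure.addHaar_closedBall _ _ (by positivity), finrank_euclideanSpace_fin]
    _ = (↑(N + 1) : ℝ≥0∞) * (ENNReal.ofReal ((d + h) ^ n) *
        volume (Metric.ball (0 : EuclideanSpace ℝ (Fin n)) 1)) := by
      rw [Finset.sum_const, Finset.card_range, nsmul_eq_mul]

/-- There is a constant `C = C(n)` such that for every set `E ⊆ ℝⁿ` and
every non-constant rectifiable path `γ`, the outer measure of the set of `x` with
`E ∩ |γ + x| ≠ ∅` is at most `C · max{ℓ(γ), diam E} · (diam E)^{n-1}`. -/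
theorem stmt_9 (n : ℕ) :
    ∃ C : ℝ≥0∞, 0 < C ∧ C ≠ ⊤ ∧
      ∀ (E : Set (EuclideanSpace ℝ (Fin n))) (γ : RectCurve n), 0 < γ.len →
        volume {x : EuclideanSpace ℝ (Fin n) |
            (E ∩ (fun t => γ.toFun t + x) '' Set.Icc 0 γ.len).Nonempty} ≤
          C * max (ENNReal.ofReal γ.len) (EMetric.diam E) * EMetric.diam E ^ (n - 1) := by
  set B := volume (Metric.ball (0 : EuclideanSpace ℝ (Fin n)) 1) with hB
  have hBtop : B ≠ ⊤ := (Metric.isBounded_ball.measure_lt_top).ne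
  set C : ℝ≥0∞ := 3 * 2 ^ n * B + 1 with hC
  have hC0 : 0 < C := lt_of_lt_of_le one_pos le_add_self
  have hCtop : C ≠ ⊤ := by
    refine ENNReal.add_ne_top.2 ⟨?_, ENNReal.one_ne_top⟩
    exact ENNReal.mul_ne_top (by simp [ENNReal.mul_ne_top, ENNReal.pow_ne_top]) hBtop
  have h123 : (1 : ℝ≥0∞) ≤ 3 * 2 ^ n :=
    le_trans (by norm_num : (1:ℝ≥0∞) ≤ 3)
      (le_mul_of_one_le_right (by norm_num) (one_le_pow_of_one_le' one_le_two n))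
  have hBC : B ≤ C := by
    calc B = 1 * B := (one_mul B).symm
      _ ≤ 3 * 2 ^ n * B := mul_le_mul_left h123 B
      _ ≤ C := le_self_add
  refine ⟨C, hC0, hCtop, fun E γ hγ => ?_⟩
  rcases Nat.eq_zero_or_pos n with hn | hn
  · subst hn
    haveI : Subsingleton (EuclideanSpace ℝ (Fin 0)) :=
      ⟨fun a b => PiLp.ext fun i => i.elim0⟩
    have h0 := γ.arclength γ.len ⟨γ.len_nonneg, le_refl _⟩
    rw [eVariationOn.constant_on (Set.subsingleton_of_subsingleton)] at h0
    exact absurd h0.symm (ENNReal.ofReal_pos.2 hγ).ne'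
  obtain ⟨m, rfl⟩ : ∃ m, n = m + 1 := ⟨n - 1, by omega⟩
  simp only [Nat.add_sub_cancel]
  rcases E.eq_empty_or_nonempty with hE | ⟨e₀, he₀⟩
  · subst hE; simp
  by_cases hdiam : EMetric.diam E = ⊤
  · rw [hdiam]
    have h1 : C * max (ENNReal.ofReal γ.len) ⊤ = ⊤ := by
      rw [max_eq_right le_top, ENNReal.mul_top hC0.ne']
    rw [h1, ENNReal.top_mul (pow_ne_zero _ (by simp))]
    exact le_top
  set d := (EMetric.diam E).toReal with hd
  have hd0 : 0 ≤ d := ENNReal.toReal_nonneg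
  have hdiam_eq : EMetric.diam E = ENNReal.ofReal d := (ENNReal.ofReal_toReal hdiam).symm
  set ℓ := γ.len with hℓ
  have hofmax : ENNReal.ofReal (max ℓ d) ≤ max (ENNReal.ofReal ℓ) (ENNReal.ofReal d) := by
    rcases max_choice ℓ d with h | h <;> rw [h]
    · exact le_max_left _ _
    · exact le_max_right _ _
  rcases lt_or_eq_of_le hd0 with hdpos | hdzero
  · -- d > 0 : take h = d
    have key := cover_bound γ he₀ hdiam hdpos
    have hreal : ((⌊ℓ / d⌋₊ + 1 : ℕ) : ℝ) * (d + d) ^ (m+1) ≤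
        3 * 2 ^ (m+1) * max ℓ d * d ^ m := by
      have hfl : (⌊ℓ / d⌋₊ : ℝ) ≤ ℓ / d := Nat.floor_le (div_nonneg γ.len_nonneg hd0)
      have h1 : ((⌊ℓ / d⌋₊ + 1 : ℕ) : ℝ) * d ≤ ℓ + d := by
        push_cast
        have : (⌊ℓ / d⌋₊ : ℝ) * d ≤ ℓ := by
          calc (⌊ℓ / d⌋₊ : ℝ) * d ≤ ℓ / d * d := by gcongr
            _ = ℓ := div_mul_cancel₀ _ hdpos.ne'
        linarith
      have h2 : ℓ + d ≤ 2 * max ℓ d := by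
        rcases le_total ℓ d with h | h
        · rw [max_eq_right h]; linarith
        · rw [max_eq_left h]; linarith
      have hm : 0 ≤ max ℓ d := le_trans hd0 (le_max_right _ _)
      calc ((⌊ℓ / d⌋₊ + 1 : ℕ) : ℝ) * (d + d) ^ (m+1)
          = (((⌊ℓ / d⌋₊ + 1 : ℕ) : ℝ) * d) * (2 ^ (m+1) * d ^ m) := by ring
        _ ≤ (ℓ + d) * (2 ^ (m+1) * d ^ m) :=
            mul_le_mul_of_nonneg_right h1 (by positivity)
        _ ≤ (2 * max ℓ d) * (2 ^ (m+1) * d ^ m) :=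
            mul_le_mul_of_nonneg_right h2 (by positivity)
        _ ≤ 3 * 2 ^ (m+1) * max ℓ d * d ^ m := by
            nlinarith [pow_nonneg hd0 m, pow_pos (two_pos (α := ℝ)) (m+1),
              mul_nonneg hm (pow_nonneg hd0 m),
              mul_nonneg (mul_nonneg hm (pow_nonneg hd0 m)) (pow_pos (two_pos (α := ℝ)) (m+1)).le]
    calc volume {x : EuclideanSpace ℝ (Fin (m+1)) |
          (E ∩ (fun t => γ.toFun t + x) '' Set.Icc 0 ℓ).Nonempty}
        ≤ (↑(⌊ℓ / d⌋₊ + 1) : ℝ≥0∞) * (ENNReal.ofReal ((d + d) ^ (m+1)) * B) := key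
      _ = ENNReal.ofReal (((⌊ℓ / d⌋₊ + 1 : ℕ) : ℝ) * (d + d) ^ (m+1)) * B := by
          rw [ENNReal.ofReal_mul (by positivity), ENNReal.ofReal_natCast, mul_assoc]
      _ ≤ ENNReal.ofReal (3 * 2 ^ (m+1) * max ℓ d * d ^ m) * B :=
          mul_le_mul_left (ENNReal.ofReal_le_ofReal hreal) B
      _ = 3 * 2 ^ (m+1) * B * ENNReal.ofReal (max ℓ d) * ENNReal.ofReal d ^ m := by
          rw [ENNReal.ofReal_mul (by positivity), ENNReal.ofReal_mul (by positivity),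
            ENNReal.ofReal_pow hd0]
          rw [ENNReal.ofReal_mul (by norm_num), ENNReal.ofReal_pow (by norm_num),
            ENNReal.ofReal_ofNat, ENNReal.ofReal_ofNat]
          ring
      _ ≤ C * max (ENNReal.ofReal ℓ) (EMetric.diam E) * EMetric.diam E ^ m := by
          rw [hdiam_eq]
          gcongr <;> first | exact le_self_add | exact hofmax
  · -- d = 0 : let h → 0
    have hstep : ∀ h : ℝ, 0 < h →
        volume {x : EuclideanSpace ℝ (Fin (m+1)) |
            (E ∩ (fun t => γ.toFun t + x) '' Set.Icc 0 ℓ).Nonempty} ≤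
          ENNReal.ofReal ((ℓ + h) * h ^ m) * B := by
      intro h hh
      have key := cover_bound γ he₀ hdiam hh
      rw [← hd, ← hdzero] at key
      have hreal : ((⌊ℓ / h⌋₊ + 1 : ℕ) : ℝ) * (0 + h) ^ (m+1) ≤ (ℓ + h) * h ^ m := by
        have hfl : (⌊ℓ / h⌋₊ : ℝ) ≤ ℓ / h := Nat.floor_le (div_nonneg γ.len_nonneg hh.le)
        have h1 : ((⌊ℓ / h⌋₊ + 1 : ℕ) : ℝ) * h ≤ ℓ + h := by
          push_cast
          have : (⌊ℓ / h⌋₊ : ℝ) * h ≤ ℓ := by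
            calc (⌊ℓ / h⌋₊ : ℝ) * h ≤ ℓ / h * h := by gcongr
              _ = ℓ := div_mul_cancel₀ _ hh.ne'
          linarith
        calc ((⌊ℓ / h⌋₊ + 1 : ℕ) : ℝ) * (0 + h) ^ (m+1)
            = (((⌊ℓ / h⌋₊ + 1 : ℕ) : ℝ) * h) * h ^ m := by ring
          _ ≤ (ℓ + h) * h ^ m := mul_le_mul_of_nonneg_right h1 (by positivity)
      calc volume {x : EuclideanSpace ℝ (Fin (m+1)) |
            (E ∩ (fun t => γ.toFun t + x) '' Set.Icc 0 ℓ).Nonempty}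
          ≤ (↑(⌊ℓ / h⌋₊ + 1) : ℝ≥0∞) * (ENNReal.ofReal ((0 + h) ^ (m+1)) * B) := key
        _ = ENNReal.ofReal (((⌊ℓ / h⌋₊ + 1 : ℕ) : ℝ) * (0 + h) ^ (m+1)) * B := by
            rw [ENNReal.ofReal_mul (by positivity), ENNReal.ofReal_natCast, mul_assoc]
        _ ≤ ENNReal.ofReal ((ℓ + h) * h ^ m) * B :=
            mul_le_mul_left (ENNReal.ofReal_le_ofReal hreal) B
    have htend : Filter.Tendsto (fun h : ℝ => ENNReal.ofReal ((ℓ + h) * h ^ m) * B)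
        (nhdsWithin 0 (Set.Ioi 0)) (nhds (ENNReal.ofReal (ℓ * 0 ^ m) * B)) := by
      apply ENNReal.Tendsto.mul_const _ (Or.inr hBtop)
      apply ENNReal.tendsto_ofReal
      have hc : Continuous fun h : ℝ => (ℓ + h) * h ^ m := (continuous_const.add continuous_id).mul (continuous_pow m)
      have := (hc.tendsto 0).mono_left (nhdsWithin_le_nhds (s := Set.Ioi (0:ℝ)))
      simpa using this
    have hle : volume {x : EuclideanSpace ℝ (Fin (m+1)) |
          (E ∩ (fun t => γ.toFun t + x) '' Set.Icc 0 ℓ).Nonempty} ≤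
        ENNReal.ofReal (ℓ * 0 ^ m) * B :=
      ge_of_tendsto htend (eventually_nhdsWithin_of_forall fun h hh => hstep h hh)
    have hzero : EMetric.diam E = 0 := by
      rw [hdiam_eq, ← hdzero, ENNReal.ofReal_zero]
    rw [hzero]
    calc volume {x : EuclideanSpace ℝ (Fin (m+1)) |
          (E ∩ (fun t => γ.toFun t + x) '' Set.Icc 0 ℓ).Nonempty}
        ≤ ENNReal.ofReal (ℓ * 0 ^ m) * B := hle
      _ = ENNReal.ofReal ℓ * (0 : ℝ≥0∞) ^ m * B := by
          rw [ENNReal.ofReal_mul γ.len_nonneg, ENNReal.ofReal_pow le_rfl, ENNReal.ofReal_zero]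
      _ ≤ C * max (ENNReal.ofReal ℓ) 0 * (0 : ℝ≥0∞) ^ m := by
          rw [max_eq_left zero_le]
          calc ENNReal.ofReal ℓ * (0:ℝ≥0∞) ^ m * B
              ≤ ENNReal.ofReal ℓ * (0:ℝ≥0∞) ^ m * C := mul_le_mul_right hBC _
            _ = C * ENNReal.ofReal ℓ * (0:ℝ≥0∞) ^ m := by ring
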